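/- arXiv:2001.01079 — 2 statements merged into one kernel-verified Lean document; each statement's English description precedes it below -/
import Mathlib

section
/- Projection onto a divergence ball: let D be differentiable and strictly convex in the second argument, let P ≠ Q, and suppose P* lies on the boundary ∂B_κ(P) (D(P‖P*) = κ) and satisfies (1−α)∇₂D(P‖P*) + α∇₂D(Q‖P*) = 0 for some α ∈ (0,1]. Then P* is the unique minimizer of R ↦ D(Q‖R) over the ball B_κ(P) = { R : D(P‖R) ≤ κ }. -/
open Set InnerProductSpace

local notation "⟪" x ", " y "⟫" => @inner ℝ _ _ x y

/-- First-order condition for convex differentiable functions. -/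
lemma convex_grad_le {F : Type*} [NormedAddCommGroup F] [InnerProductSpace ℝ F]
    [CompleteSpace F] {f : F → ℝ} {G x : F}
    (hf : ConvexOn ℝ Set.univ f) (hg : HasGradientAt f G x) (y : F) :
    ⟪G, y - x⟫ ≤ f y - f x := by
  set L : ℝ →ᵃ[ℝ] F := AffineMap.lineMap x y with hL
  have hφ : ConvexOn ℝ Set.univ (f ∘ L) := by
    have := hf.comp_affineMap L
    simpa using this
  have hd : HasDerivAt (f ∘ L) ⟪G, y - x⟫ 0 := by
    have h1 : HasFDerivAt f (toDual ℝ F G) ((0:ℝ) • (y - x) + x) := by simpa using hg.hasFDerivAt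
    have h2 : HasDerivAt (fun t : ℝ => L t) (y - x) 0 := by
      have : HasDerivAt (fun t : ℝ => t • (y - x) + x) ((1:ℝ) • (y - x)) 0 := by
        simpa using ((hasDerivAt_id (0:ℝ)).smul_const (y - x)).add_const x
      simpa [hL, AffineMap.lineMap_apply] using this
    have h3 := h1.comp_hasDerivAt (0:ℝ) (show HasDerivAt (fun t : ℝ => t • (y - x) + x) (y - x) 0 by simpa [hL, AffineMap.lineMap_apply] using h2)
    have hLeq : (⇑L) = fun t : ℝ => t • (y - x) + x := by funext t; simp [hL, AffineMap.lineMap_apply]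
    rw [hLeq, ← toDual_apply_apply]
    exact h3
  have := hφ.le_slope_of_hasDerivAt (mem_univ (0:ℝ)) (mem_univ (1:ℝ)) one_pos hd
  have hs : slope (f ∘ L) 0 1 = f y - f x := by
    simp [slope, hL, Function.comp, AffineMap.lineMap_apply]
  linarith [this.trans_eq hs]

lemma strict_convex_grad_lt {F : Type*} [NormedAddCommGroup F] [InnerProductSpace ℝ F]
    [CompleteSpace F] {f : F → ℝ} {G x : F}
    (hf : StrictConvexOn ℝ Set.univ f) (hg : HasGradientAt f G x) {y : F} (hxy : y ≠ x) :
    ⟪G, y - x⟫ < f y - f x := by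
  have hm := convex_grad_le hf.convexOn hg (midpoint ℝ x y)
  have hmid : f (midpoint ℝ x y) < 2⁻¹ * f x + 2⁻¹ * f y := by
    have := hf.2 (mem_univ x) (mem_univ y) (Ne.symm hxy)
      (by norm_num : (0:ℝ) < 1/2) (by norm_num : (0:ℝ) < 1/2) (by norm_num)
    simpa [midpoint_eq_smul_add, invOf_eq_inv, smul_add] using this
  have hmx : midpoint ℝ x y - x = (1/2 : ℝ) • (y - x) := by
    rw [midpoint_eq_smul_add, invOf_eq_inv]
    module
  rw [hmx, real_inner_smul_right] at hm
  linarith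

/-- Projection onto a divergence ball: let `D` be a differentiable and
strictly convex (second argument) divergence, `p ≠ q`, `κ > 0`, and suppose
`D(p‖p*) = κ` and `(1−α) • ∇₂D(p‖p*) + α • ∇₂D(q‖p*) = 0` for some `α ∈ (0,1]`.
Then `p*` is the unique minimizer of `r ↦ D(q‖r)` over the ball `{ r : D(p‖r) ≤ κ }`. -/
theorem stmt_15 {d : ℕ}
    (D : EuclideanSpace ℝ (Fin d) → EuclideanSpace ℝ (Fin d) → ℝ)
    (g : EuclideanSpace ℝ (Fin d) → EuclideanSpace ℝ (Fin d) → EuclideanSpace ℝ (Fin d))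
    (hnonneg : ∀ p q, 0 ≤ D p q)
    (hzero : ∀ p q, D p q = 0 ↔ p = q)
    (hgrad : ∀ p q, HasGradientAt (fun x => D p x) (g p q) q)
    (hconv : ∀ p, StrictConvexOn ℝ Set.univ (fun x => D p x))
    (p q pstar : EuclideanSpace ℝ (Fin d)) (hpq : p ≠ q)
    (κ : ℝ) (hκ : 0 < κ) (hboundary : D p pstar = κ)
    (α : ℝ) (hα : α ∈ Set.Ioc (0:ℝ) 1)
    (hstat : (1 - α) • g p pstar + α • g q pstar = 0) :
    ∀ r : EuclideanSpace ℝ (Fin d), D p r ≤ κ → r ≠ pstar →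
      D q pstar < D q r := by
  intro r hr hne
  obtain ⟨hα0, hα1⟩ := hα
  -- first-order strict inequalities
  have hP : ⟪g p pstar, r - pstar⟫ < D p r - D p pstar :=
    strict_convex_grad_lt (hconv p) (hgrad p pstar) hne
  have hQ : ⟪g q pstar, r - pstar⟫ < D q r - D q pstar :=
    strict_convex_grad_lt (hconv q) (hgrad q pstar) hne
  have hPneg : ⟪g p pstar, r - pstar⟫ < 0 := by
    have : D p r - D p pstar ≤ 0 := by rw [hboundary]; linarith
    linarith
  -- from stationarity
  have hst : α • g q pstar = -((1 - α) • g p pstar) :=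
    eq_neg_of_add_eq_zero_right hstat
  have hinner : α * ⟪g q pstar, r - pstar⟫ = -((1 - α) * ⟪g p pstar, r - pstar⟫) := by
    rw [← real_inner_smul_left, hst, inner_neg_left, real_inner_smul_left]
  have hQpos : 0 ≤ ⟪g q pstar, r - pstar⟫ := by
    nlinarith [mul_nonneg (sub_nonneg.2 hα1) (le_of_lt (neg_pos.2 hPneg))]
  linarith
end

section
/- Tangency of two divergence balls: if P* satisfies D(P‖P*) = κ₁, D(Q‖P*) = κ₂, and (1−α)∇₂D(P‖P*) + α∇₂D(Q‖P*) = 0 for some α ∈ (0,1), then the intersection of the two balls B_{κ₁}(P) ∩ B_{κ₂}(Q) equals the singleton {P*}. -/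
open Set

lemma convex_min_of_grad_zero {d : ℕ} (f : EuclideanSpace ℝ (Fin d) → ℝ)
    (hc : ConvexOn ℝ Set.univ f) {x : EuclideanSpace ℝ (Fin d)}
    (hf : HasGradientAt f 0 x) (y : EuclideanSpace ℝ (Fin d)) : f x ≤ f y := by
  have hfd : HasFDerivAt f (0 : EuclideanSpace ℝ (Fin d) →L[ℝ] ℝ) x := by
    have := hasGradientAt_iff_hasFDerivAt.mp hf
    simpa using this
  set L : ℝ →ᵃ[ℝ] EuclideanSpace ℝ (Fin d) := AffineMap.lineMap x y with hL
  have hφc : ConvexOn ℝ Set.univ (f ∘ L) := by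
    have := hc.comp_affineMap L
    simpa using this
  have hcurve : HasDerivAt (fun t : ℝ => L t) (y - x) 0 := by
    have h1 : HasDerivAt (fun t : ℝ => t • (y - x) + x) ((1 : ℝ) • (y - x)) 0 :=
      ((hasDerivAt_id 0).smul_const (y - x)).add_const x
    have hfun : (fun t : ℝ => L t) = fun t : ℝ => t • (y - x) + x := by
      funext t
      simp only [hL, AffineMap.lineMap_apply_module]
      module
    rw [hfun]
    simpa using h1
  have hx0 : L 0 = x := by simp [hL]
  have hφd : HasDerivAt (f ∘ L) 0 0 := by
    have := HasFDerivAt.comp_hasDerivAt 0 (hx0 ▸ hfd) hcurve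
    simpa using this
  have hs := hφc.le_slope_of_hasDerivAt (mem_univ (0:ℝ)) (mem_univ (1:ℝ)) one_pos hφd
  rw [slope_def_field] at hs
  simpa [hL] using hs

lemma strictConvexOn_const_mul {d : ℕ} {f : EuclideanSpace ℝ (Fin d) → ℝ}
    (hf : StrictConvexOn ℝ Set.univ f) {c : ℝ} (hc : 0 < c) :
    StrictConvexOn ℝ Set.univ (fun x => c * f x) := by
  refine ⟨convex_univ, fun x _ y _ hxy a b ha hb hab => ?_⟩
  have h := hf.2 (mem_univ x) (mem_univ y) hxy ha hb hab
  simp only [smul_eq_mul] at *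
  nlinarith



/-- Tangency of two divergence balls: if `p*` satisfies
`D(p‖p*) = κ₁`, `D(q‖p*) = κ₂`, and
`(1−α) • ∇₂D(p‖p*) + α • ∇₂D(q‖p*) = 0` for some `α ∈ (0,1)`, then
`B_{κ₁}(p) ∩ B_{κ₂}(q) = {p*}`. -/
theorem stmt_16 {d : ℕ}
    (D : EuclideanSpace ℝ (Fin d) → EuclideanSpace ℝ (Fin d) → ℝ)
    (g : EuclideanSpace ℝ (Fin d) → EuclideanSpace ℝ (Fin d) → EuclideanSpace ℝ (Fin d))
    (hnonneg : ∀ p q, 0 ≤ D p q)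
    (hzero : ∀ p q, D p q = 0 ↔ p = q)
    (hgrad : ∀ p q, HasGradientAt (fun x => D p x) (g p q) q)
    (hconv : ∀ p, StrictConvexOn ℝ Set.univ (fun x => D p x))
    (p q pstar : EuclideanSpace ℝ (Fin d)) (hpq : p ≠ q)
    (κ₁ κ₂ : ℝ) (hκ₁ : 0 < κ₁) (hκ₂ : 0 < κ₂)
    (hb₁ : D p pstar = κ₁) (hb₂ : D q pstar = κ₂)
    (α : ℝ) (hα : α ∈ Set.Ioo (0:ℝ) 1)
    (hstat : (1 - α) • g p pstar + α • g q pstar = 0) :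
    {r : EuclideanSpace ℝ (Fin d) | D p r ≤ κ₁} ∩ {r | D q r ≤ κ₂} = {pstar} := by
  obtain ⟨hα0, hα1⟩ := hα
  set F : EuclideanSpace ℝ (Fin d) → ℝ := fun x => (1 - α) * D p x + α * D q x with hFdef
  have hFs : StrictConvexOn ℝ Set.univ F :=
    (strictConvexOn_const_mul (hconv p) (by linarith)).add
      (strictConvexOn_const_mul (hconv q) hα0)
  -- gradient of F at pstar is 0
  have hgp := hasGradientAt_iff_hasFDerivAt.mp (hgrad p pstar)
  have hgq := hasGradientAt_iff_hasFDerivAt.mp (hgrad q pstar)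
  have hFd : HasFDerivAt F
      ((1 - α) • (InnerProductSpace.toDual ℝ _ (g p pstar)) +
        α • (InnerProductSpace.toDual ℝ _ (g q pstar))) pstar := by
    have h1 := hgp.const_smul (1 - α)
    have h2 := hgq.const_smul α
    have := h1.add h2
    simpa [hFdef, smul_eq_mul, Pi.add_def, Pi.smul_def] using this
  have hFgrad : HasGradientAt F 0 pstar := by
    rw [hasGradientAt_iff_hasFDerivAt]
    have : ((1 - α) • (InnerProductSpace.toDual ℝ _ (g p pstar)) +
        α • (InnerProductSpace.toDual ℝ _ (g q pstar)))
        = InnerProductSpace.toDual ℝ (EuclideanSpace ℝ (Fin d)) 0 := by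
      rw [← map_smul, ← map_smul, ← map_add, hstat]
    rwa [this] at hFd
  have hmin := convex_min_of_grad_zero F hFs.convexOn hFgrad
  ext r
  simp only [Set.mem_inter_iff, Set.mem_setOf_eq, Set.mem_singleton_iff]
  constructor
  · rintro ⟨hr1, hr2⟩
    by_contra hne
    set m : EuclideanSpace ℝ (Fin d) := (1/2 : ℝ) • r + (1/2 : ℝ) • pstar with hm
    have hlt := hFs.2 (mem_univ r) (mem_univ pstar) hne (by norm_num : (0:ℝ) < 1/2)
      (by norm_num : (0:ℝ) < 1/2) (by norm_num)
    simp only [smul_eq_mul] at hlt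
    have hFr : F r ≤ F pstar := by
      simp only [hFdef, hb₁, hb₂]
      have h1 : (1 - α) * D p r ≤ (1 - α) * κ₁ :=
        mul_le_mul_of_nonneg_left hr1 (by linarith)
      have h2 : α * D q r ≤ α * κ₂ := mul_le_mul_of_nonneg_left hr2 hα0.le
      linarith
    have hcontra : F pstar < 1/2 * F r + 1/2 * F pstar :=
      lt_of_le_of_lt (hmin ((1/2:ℝ) • r + (1/2:ℝ) • pstar)) hlt
    clear_value F
    linarith
  · rintro rfl
    exact ⟨le_of_eq hb₁, le_of_eq hb₂⟩
end
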